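/- For lists of Booleans, the merge operation defined recursively by: Merge([a],[b]) = [a ∨ b, a ∧ b], and for lists of even length m, Merge(A,B) computed by merging the odd-indexed elements of A and B into C, merging the even-indexed elements into D, and outputting [C[1], C[2]∨D[1], C[2]∧D[1], ..., C[m]∨D[m-1], C[m]∧D[m-1], D[m]], satisfies: if A and B are sorted in non-increasing order (with true > false), then Merge(A,B) is a sorted permutation-with-multiplicity of A ++ B (i.e., a sorted list with the same multiset of elements). -/

import Mathlib

/-- Elements at odd (1-based) positions 1,3,5,... -/
def oddIdx {α : Type*} : List α → List α
  | [] => []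
  | [a] => [a]
  | a :: _ :: t => a :: oddIdx t

/-- Elements at even (1-based) positions 2,4,6,... -/
def evenIdx {α : Type*} : List α → List α
  | [] => []
  | [_] => []
  | _ :: b :: t => b :: evenIdx t

/-- The weaving step: pairs `(C[i], D[i-1])` for `i = 2..m` become
`C[i] ∨ D[i-1], C[i] ∧ D[i-1]`, and the last element of `D` is appended. -/
def zipCmp : List Bool → List Bool → List Bool
  | c :: cs, d :: ds => (c || d) :: (c && d) :: zipCmp cs ds
  | [], ds => ds
  | cs, [] => cs

/-- Batcher's odd-even merge of two lists of length `2 ^ k`. -/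
def omerge : ℕ → List Bool → List Bool → List Bool
  | 0, A, B =>
    match A, B with
    | [a], [b] => [a || b, a && b]
    | A, B => A ++ B
  | k + 1, A, B =>
    match omerge k (oddIdx A) (oddIdx B), omerge k (evenIdx A) (evenIdx B) with
    | [], D => D
    | c :: cs, D => c :: zipCmp cs D

def rep (t f : ℕ) : List Bool := List.replicate t true ++ List.replicate f false

lemma rep_succ (t f : ℕ) : rep (t+1) f = true :: rep t f := rfl
lemma rep_zero (f : ℕ) : rep 0 f = List.replicate f false := rfl
lemma rep_zero_succ (f : ℕ) : rep 0 (f+1) = false :: rep 0 f := rfl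

lemma oddIdx_replicate (r : ℕ) (a : Bool) :
    oddIdx (List.replicate (2*r) a) = List.replicate r a := by
  induction r with
  | zero => rfl
  | succ n ih =>
    have h : 2*(n+1) = (2*n)+1+1 := by ring
    rw [h, List.replicate_succ, List.replicate_succ, oddIdx, ih, List.replicate_succ]

lemma evenIdx_replicate (r : ℕ) (a : Bool) :
    evenIdx (List.replicate (2*r) a) = List.replicate r a := by
  induction r with
  | zero => rfl
  | succ n ih =>
    have h : 2*(n+1) = (2*n)+1+1 := by ring
    rw [h, List.replicate_succ, List.replicate_succ, evenIdx, ih, List.replicate_succ]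

lemma oddIdx_even (s r : ℕ) : oddIdx (rep (2*s) (2*r)) = rep s r := by
  induction s with
  | zero => simpa [rep] using oddIdx_replicate r false
  | succ n ih =>
    have h : 2*(n+1) = (2*n)+1+1 := by ring
    rw [h, rep_succ, rep_succ, oddIdx, ih, rep_succ]

lemma evenIdx_even (s r : ℕ) : evenIdx (rep (2*s) (2*r)) = rep s r := by
  induction s with
  | zero => simpa [rep] using evenIdx_replicate r false
  | succ n ih =>
    have h : 2*(n+1) = (2*n)+1+1 := by ring
    rw [h, rep_succ, rep_succ, evenIdx, ih, rep_succ]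

lemma oddIdx_odd (s r : ℕ) : oddIdx (rep (2*s+1) (2*r+1)) = rep (s+1) r := by
  induction s with
  | zero =>
    show oddIdx (rep (0+1) (2*r+1)) = rep (0+1) r
    rw [rep_succ, rep_zero, List.replicate_succ, oddIdx, oddIdx_replicate, ← rep_zero, ← rep_succ]
  | succ n ih =>
    have h : 2*(n+1)+1 = (2*n+1)+1+1 := by ring
    rw [h, rep_succ, rep_succ, oddIdx, ih, ← rep_succ]

lemma evenIdx_odd (s r : ℕ) : evenIdx (rep (2*s+1) (2*r+1)) = rep s (r+1) := by
  induction s with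
  | zero =>
    show evenIdx (rep (0+1) (2*r+1)) = rep 0 (r+1)
    rw [rep_succ, rep_zero, List.replicate_succ, evenIdx, evenIdx_replicate,
      ← List.replicate_succ, ← rep_zero]
  | succ n ih =>
    have h : 2*(n+1)+1 = (2*n+1)+1+1 := by ring
    rw [h, rep_succ, rep_succ, evenIdx, ih, ← rep_succ]

lemma zipFF (x y : ℕ) :
    zipCmp (List.replicate x false) (List.replicate y false) = List.replicate (x+y) false := by
  induction x generalizing y with
  | zero => simp [zipCmp]
  | succ n ih =>
    cases y with
    | zero => simp [zipCmp, List.replicate_succ]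
    | succ m =>
      rw [List.replicate_succ, List.replicate_succ, zipCmp, ih]
      show (false :: false :: List.replicate (n+m) false) = _
      rw [← List.replicate_succ, ← List.replicate_succ]
      congr 1
      omega

lemma zipZ1 (p q : ℕ) : zipCmp (rep p q) (rep (p+1) q) = rep (2*p+1) (2*q) := by
  induction p with
  | zero =>
    cases q with
    | zero => rfl
    | succ m =>
      show zipCmp (false :: List.replicate m false) (true :: false :: List.replicate m false) = _
      rw [zipCmp]
      show true :: false :: zipCmp (List.replicate m false) (List.replicate (m+1) false) = _
      rw [zipFF]
      show rep 1 ((m + (m+1)) + 1) = rep (2*0+1) (2*(m+1))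
      congr 1 <;> omega
  | succ n ih =>
    rw [rep_succ n, rep_succ (n+1), zipCmp, ih]
    show rep ((2*n+1)+1+1) (2*q) = _
    congr 1 <;> omega

lemma zipZ2 (d x : ℕ) : zipCmp (rep d x) (rep d (x+1)) = rep (2*d) (2*x+1) := by
  induction d with
  | zero =>
    rw [rep_zero, rep_zero, zipFF]
    show rep 0 (x + (x+1)) = rep (2*0) (2*x+1)
    congr 1 <;> omega
  | succ n ih =>
    rw [rep_succ n, rep_succ n, zipCmp, ih]
    show rep ((2*n)+1+1) (2*x+1) = _
    congr 1 <;> omega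

lemma zipZ3 (d x : ℕ) : zipCmp (rep (d+1) x) (rep d (x+2)) = rep (2*d+1) (2*x+2) := by
  induction d with
  | zero =>
    show (true || false) :: (true && false) :: zipCmp (rep 0 x) (List.replicate (x+1) false) = _
    rw [rep_zero, zipFF]
    show rep 1 ((x + (x+1)) + 1) = rep (2*0+1) (2*x+2)
    congr 1 <;> omega
  | succ n ih =>
    rw [rep_succ (n+1), rep_succ n]
    show (true || true) :: (true && true) :: zipCmp (rep (n+1) x) (rep n (x+2)) = _
    rw [ih]
    show rep ((2*n+1)+1+1) (2*x+2) = _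
    congr 1 <;> omega

lemma omerge_rep : ∀ k t f t' f', t + f = 2^k → t' + f' = 2^k →
    omerge k (rep t f) (rep t' f') = rep (t+t') (f+f') := by
  intro k
  induction k with
  | zero =>
    intro t f t' f' h h'
    simp only [pow_zero] at h h'
    rcases show (t = 0 ∧ f = 1) ∨ (t = 1 ∧ f = 0) from by omega with ⟨rfl, rfl⟩ | ⟨rfl, rfl⟩ <;>
      rcases show (t' = 0 ∧ f' = 1) ∨ (t' = 1 ∧ f' = 0) from by omega with ⟨rfl, rfl⟩ | ⟨rfl, rfl⟩ <;>
      rfl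
  | succ k ih =>
    intro t f t' f' h h'
    have hpar : t % 2 = f % 2 := by
      have : (2:ℕ)^(k+1) = 2 * 2^k := by ring
      omega
    have hpar' : t' % 2 = f' % 2 := by
      have : (2:ℕ)^(k+1) = 2 * 2^k := by ring
      omega
    have h2 : (2:ℕ)^(k+1) = 2 * 2^k := by ring
    rcases Nat.even_or_odd t with ⟨s₁, hs₁⟩ | ⟨s₁, hs₁⟩ <;>
      rcases Nat.even_or_odd t' with ⟨s₂, hs₂⟩ | ⟨s₂, hs₂⟩
    · -- both even
      obtain ⟨r₁, hr₁⟩ : ∃ r, f = 2*r := ⟨f/2, by omega⟩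
      obtain ⟨r₂, hr₂⟩ : ∃ r, f' = 2*r := ⟨f'/2, by omega⟩
      subst hr₁ hr₂
      rw [show t = 2*s₁ from by omega, show t' = 2*s₂ from by omega]
      rw [omerge, oddIdx_even, oddIdx_even, evenIdx_even, evenIdx_even,
        ih s₁ r₁ s₂ r₂ (by omega) (by omega)]
      rcases Nat.eq_zero_or_eq_succ_pred (s₁+s₂) with hp | hp
      · rcases Nat.eq_zero_or_eq_succ_pred (r₁+r₂) with hq | hq
        · rw [hp, hq]
          show rep 0 0 = rep (2*s₁+2*s₂) (2*r₁+2*r₂)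
          congr 1 <;> omega
        · rw [hp, hq, rep_zero_succ]
          show (false : Bool) :: zipCmp (rep 0 ((r₁+r₂).pred)) (rep 0 ((r₁+r₂).pred + 1)) = _
          rw [zipZ2]
          show (false : Bool) :: rep 0 (2*(r₁+r₂).pred+1) = _
          rw [← rep_zero_succ]
          show rep 0 (2*(r₁+r₂).pred+1+1) = rep (2*s₁+2*s₂) (2*r₁+2*r₂)
          congr 1 <;> omega
      · rw [hp, rep_succ]
        show (true : Bool) :: zipCmp (rep ((s₁+s₂).pred) (r₁+r₂)) (rep ((s₁+s₂).pred + 1) (r₁+r₂)) = _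
        rw [zipZ1, ← rep_succ]
        show rep (2*(s₁+s₂).pred+1+1) (2*(r₁+r₂)) = rep (2*s₁+2*s₂) (2*r₁+2*r₂)
        congr 1 <;> omega
    · -- A even, B odd
      obtain ⟨r₁, hr₁⟩ : ∃ r, f = 2*r := ⟨f/2, by omega⟩
      obtain ⟨r₂, hr₂⟩ : ∃ r, f' = 2*r+1 := ⟨f'/2, by omega⟩
      subst hr₁ hr₂
      rw [show t = 2*s₁ from by omega, show t' = 2*s₂+1 from by omega]
      rw [omerge, oddIdx_even, oddIdx_odd, evenIdx_even, evenIdx_odd,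
        ih s₁ r₁ (s₂+1) r₂ (by omega) (by omega), ih s₁ r₁ s₂ (r₂+1) (by omega) (by omega)]
      rw [show s₁ + (s₂+1) = (s₁+s₂)+1 from by omega,
        show r₁ + (r₂+1) = (r₁+r₂)+1 from by omega, rep_succ]
      show (true : Bool) :: zipCmp (rep (s₁+s₂) (r₁+r₂)) (rep (s₁+s₂) ((r₁+r₂)+1)) = _
      rw [zipZ2, ← rep_succ]
      show rep (2*(s₁+s₂)+1) (2*(r₁+r₂)+1) = rep (2*s₁+(2*s₂+1)) (2*r₁+(2*r₂+1))
      congr 1 <;> omega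
    · -- A odd, B even
      obtain ⟨r₁, hr₁⟩ : ∃ r, f = 2*r+1 := ⟨f/2, by omega⟩
      obtain ⟨r₂, hr₂⟩ : ∃ r, f' = 2*r := ⟨f'/2, by omega⟩
      subst hr₁ hr₂
      rw [show t = 2*s₁+1 from by omega, show t' = 2*s₂ from by omega]
      rw [omerge, oddIdx_odd, oddIdx_even, evenIdx_odd, evenIdx_even,
        ih (s₁+1) r₁ s₂ r₂ (by omega) (by omega), ih s₁ (r₁+1) s₂ r₂ (by omega) (by omega)]
      rw [show (s₁+1) + s₂ = (s₁+s₂)+1 from by omega,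
        show (r₁+1) + r₂ = (r₁+r₂)+1 from by omega, rep_succ]
      show (true : Bool) :: zipCmp (rep (s₁+s₂) (r₁+r₂)) (rep (s₁+s₂) ((r₁+r₂)+1)) = _
      rw [zipZ2, ← rep_succ]
      show rep (2*(s₁+s₂)+1) (2*(r₁+r₂)+1) = rep ((2*s₁+1)+2*s₂) ((2*r₁+1)+2*r₂)
      congr 1 <;> omega
    · -- both odd
      obtain ⟨r₁, hr₁⟩ : ∃ r, f = 2*r+1 := ⟨f/2, by omega⟩
      obtain ⟨r₂, hr₂⟩ : ∃ r, f' = 2*r+1 := ⟨f'/2, by omega⟩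
      subst hr₁ hr₂
      rw [show t = 2*s₁+1 from by omega, show t' = 2*s₂+1 from by omega]
      rw [omerge, oddIdx_odd, oddIdx_odd, evenIdx_odd, evenIdx_odd,
        ih (s₁+1) r₁ (s₂+1) r₂ (by omega) (by omega), ih s₁ (r₁+1) s₂ (r₂+1) (by omega) (by omega)]
      rw [show (s₁+1) + (s₂+1) = ((s₁+s₂)+1)+1 from by omega,
        show (r₁+1) + (r₂+1) = (r₁+r₂)+2 from by omega, rep_succ, rep_succ]
      show (true : Bool) :: zipCmp (true :: rep (s₁+s₂) (r₁+r₂)) (rep (s₁+s₂) ((r₁+r₂)+2)) = _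
      rw [← rep_succ, zipZ3, ← rep_succ]
      show rep (2*(s₁+s₂)+1+1) (2*(r₁+r₂)+2) = rep ((2*s₁+1)+(2*s₂+1)) ((2*r₁+1)+(2*r₂+1))
      congr 1 <;> omega

lemma sorted_eq_rep : ∀ {L : List Bool}, L.Pairwise (· ≥ ·) → ∃ t f, L = rep t f := by
  intro L
  induction L with
  | nil => exact fun _ => ⟨0, 0, rfl⟩
  | cons a l ih =>
    intro h
    rw [List.pairwise_cons] at h
    obtain ⟨hall, htail⟩ := h
    cases a with
    | true =>
      obtain ⟨t, f, rfl⟩ := ih htail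
      exact ⟨t+1, f, (rep_succ t f).symm⟩
    | false =>
      refine ⟨0, l.length + 1, ?_⟩
      rw [rep_zero, List.replicate_succ]
      congr 1
      apply List.eq_replicate_of_mem
      intro b hb
      have := hall b hb
      revert this
      cases b <;> simp
lemma sorted_rep (t f : ℕ) : (rep t f).Pairwise (· ≥ ·) := by
  rw [rep, List.pairwise_append]
  refine ⟨List.pairwise_replicate.mpr (Or.inr le_rfl), List.pairwise_replicate.mpr (Or.inr le_rfl), ?_⟩
  intro a ha b hb
  rw [List.eq_of_mem_replicate ha, List.eq_of_mem_replicate hb]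
  exact Bool.false_le true

lemma rep_perm (t f t' f' : ℕ) : (rep (t+t') (f+f')).Perm (rep t f ++ rep t' f') := by
  rw [List.perm_iff_count]
  intro b
  cases b <;> simp [rep, List.count_append, List.count_replicate] <;> omega

lemma length_rep (t f : ℕ) : (rep t f).length = t + f := by
  simp [rep]


/-- If `A` and `B` are sorted non-increasingly (true > false), then their odd-even merge
is sorted and is a permutation of `A ++ B` (same multiset of elements). -/
theorem stmt0 (k : ℕ) (A B : List Bool)
    (hA : A.length = 2 ^ k) (hB : B.length = 2 ^ k)
    (hsA : A.Pairwise (· ≥ ·)) (hsB : B.Pairwise (· ≥ ·)) :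
    (omerge k A B).Pairwise (· ≥ ·) ∧ (omerge k A B).Perm (A ++ B) := by
  obtain ⟨t, f, rfl⟩ := sorted_eq_rep hsA
  obtain ⟨t', f', rfl⟩ := sorted_eq_rep hsB
  rw [length_rep] at hA hB
  rw [omerge_rep k t f t' f' hA hB]
  exact ⟨sorted_rep _ _, rep_perm t f t' f'⟩
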